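/- Let T be a locally finite nonsingular undirected tree with dual graph T̂. The natural identification of reduced infinite paths in T with infinite paths in T̂ induces a homeomorphism ∂T ≅ ∂T̂, which is equivariant for any group action on T (and the induced action on T̂). -/

import Mathlib

/-- A directed graph: vertices, edges, and range/source maps. -/
structure DirGraph where
  V : Type
  E : Type
  r : E → V
  s : E → V

namespace DirGraph

/-- `G.IsDPath v w p` : `p` is a directed path from `w` to `v`, i.e. a (possibly empty)
composable sequence of edges with range `v` and source `w`. -/
def IsDPath (G : DirGraph) : G.V → G.V → List G.E → Prop
  | v, w, [] => v = w
  | v, w, e :: p => G.r e = v ∧ G.IsDPath (G.s e) w p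

/-- The relation `v ≤ w` : there is a directed path from `w` to `v`. -/
def Le (G : DirGraph) (v w : G.V) : Prop := ∃ p, G.IsDPath v w p

/-- A multitree: there is at most one directed path between any two vertices. -/
def IsMultitree (G : DirGraph) : Prop :=
  ∀ v w p q, G.IsDPath v w p → G.IsDPath v w q → p = q

/-- Row-finite: every vertex receives finitely many edges. -/
def RowFinite (G : DirGraph) : Prop := ∀ v, {e : G.E | G.r e = v}.Finite

/-- No sources: every vertex receives at least one edge. -/
def NoSources (G : DirGraph) : Prop := ∀ v, ∃ e, G.r e = v

/-- The set of minimal common upper bounds of `v` and `w`. -/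
def mub (G : DirGraph) (v w : G.V) : Set G.V :=
  {u | G.Le v u ∧ G.Le w u ∧ ∀ u', G.Le v u' → G.Le w u' → G.Le u' u → u' = u}

/-- Finitely aligned: any two vertices have finitely many minimal common upper bounds. -/
def FinAligned (G : DirGraph) : Prop := ∀ v w, (G.mub v w).Finite

/-- Infinite (directed) paths in `G`. -/
def InfPath (G : DirGraph) := {l : ℕ → G.E // ∀ n, G.s (l n) = G.r (l (n + 1))}

/-- Shift-tail equivalence of infinite paths. -/
def stEquiv (G : DirGraph) (a b : G.InfPath) : Prop :=
  ∃ m n : ℕ, ∀ k, a.1 (m + k) = b.1 (n + k)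

/-- The boundary `∂G`: shift-tail equivalence classes of infinite paths. -/
def Bdry (G : DirGraph) := Quot G.stEquiv

/-- The cylinder set `Z_∂(v) ⊆ ∂G` of boundary classes of infinite paths with range `v`. -/
def Zb (G : DirGraph) (v : G.V) : Set G.Bdry :=
  {x | ∃ l : G.InfPath, G.r (l.1 0) = v ∧ Quot.mk G.stEquiv l = x}

/-- The cylinder-set topology on the boundary `∂G`. -/
def bdryTop (G : DirGraph) : TopologicalSpace G.Bdry :=
  TopologicalSpace.generateFrom {S | ∃ v, S = G.Zb v}

/-- The cylinder set `Z(v) ⊆ Ω = G.V ⊕ ∂G`: vertices `w` with a path from `w` to `v`,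
together with boundary classes of infinite paths through `v`. -/
def Zfull (G : DirGraph) (v : G.V) : Set (G.V ⊕ G.Bdry) :=
  {x | Sum.elim (fun w => G.Le v w) (fun b => b ∈ G.Zb v) x}

end DirGraph

/-- An undirected graph: edges come with an involutive, fixed-point-free reversal. -/
structure UGraph where
  V : Type
  E : Type
  r : E → V
  s : E → V
  bar : E → E
  bar_bar : ∀ e, bar (bar e) = e
  bar_ne : ∀ e, bar e ≠ e
  r_bar : ∀ e, r (bar e) = s e

namespace UGraph

/-- `T.IsUPath v w p` : `p` is a walk from `w` to `v` in the undirected graph `T`. -/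
def IsUPath (T : UGraph) : T.V → T.V → List T.E → Prop
  | v, w, [] => v = w
  | v, w, e :: p => T.r e = v ∧ T.IsUPath (T.s e) w p

/-- A reduced path: a walk with no backtracking. -/
def IsRedPath (T : UGraph) (v w : T.V) (p : List T.E) : Prop :=
  T.IsUPath v w p ∧ p.Chain' (fun e f => f ≠ T.bar e)

/-- A tree: there is a unique reduced path between any two vertices. -/
def IsTree (T : UGraph) : Prop := ∀ v w, ∃! p, T.IsRedPath v w p

/-- Locally finite: every vertex receives finitely many edges. -/
def LocFinite (T : UGraph) : Prop := ∀ v, {e : T.E | T.r e = v}.Finite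

/-- Nonsingular: every vertex receives at least two edges. -/
def Nonsingular (T : UGraph) : Prop := ∀ v, ∃ e f, e ≠ f ∧ T.r e = v ∧ T.r f = v

/-- The dual directed graph `T̂`: vertices are the edges of `T`, edges are the reduced
paths of length 2 in `T`, with `r̂(ef) = e` and `ŝ(ef) = f`. -/
def dual (T : UGraph) : DirGraph where
  V := T.E
  E := {p : T.E × T.E // T.s p.1 = T.r p.2 ∧ p.2 ≠ T.bar p.1}
  r := fun p => p.1.1
  s := fun p => p.1.2

end UGraph

namespace UGraph

/-- Reduced infinite paths in an undirected graph. -/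
def RedInf (T : UGraph) :=
  {l : ℕ → T.E // (∀ n, T.s (l n) = T.r (l (n + 1))) ∧ (∀ n, l (n + 1) ≠ T.bar (l n))}

/-- Shift-tail equivalence of reduced infinite paths. -/
def stRed (T : UGraph) (a b : T.RedInf) : Prop :=
  ∃ m n : ℕ, ∀ k, a.1 (m + k) = b.1 (n + k)

/-- The boundary `∂T` of an undirected graph: shift-tail classes of reduced infinite
paths. -/
def TBdry (T : UGraph) := Quot T.stRed

/-- The cylinder set `Z_∂(e) ⊆ ∂T` of classes of reduced infinite paths starting
with the edge `e`. -/
def ZT (T : UGraph) (e : T.E) : Set T.TBdry :=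
  {x | ∃ l : T.RedInf, l.1 0 = e ∧ Quot.mk T.stRed l = x}

/-- The cylinder-set topology on `∂T`. -/
def tbdryTop (T : UGraph) : TopologicalSpace T.TBdry :=
  TopologicalSpace.generateFrom {S | ∃ e, S = T.ZT e}

/-- The natural identification of a reduced infinite path in `T` with an infinite
directed path in the dual graph `T̂`. -/
def dualInf (T : UGraph) (l : T.RedInf) : (T.dual).InfPath :=
  ⟨fun n => ⟨(l.1 n, l.1 (n + 1)), l.2.1 n, l.2.2 n⟩, fun _ => rfl⟩

/-- The action of a graph automorphism (given on edges) on reduced infinite paths. -/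
def actRed (T : UGraph) (aE : T.E → T.E)
    (hadj : ∀ e f, T.s e = T.r f → T.s (aE e) = T.r (aE f))
    (hbar : ∀ e, aE (T.bar e) = T.bar (aE e))
    (hinj : Function.Injective aE) (l : T.RedInf) : T.RedInf :=
  ⟨fun n => aE (l.1 n), fun n => hadj _ _ (l.2.1 n),
    fun n h => l.2.2 n (hinj (h.trans (hbar (l.1 n)).symm))⟩

end UGraph


section Aux

/-- Generic: "agree up to shifts" is an equivalence relation on sequences. -/
lemma stGen_equiv {α β : Type*} (F : α → ℕ → β) :
    Equivalence (fun a b : α => ∃ m n : ℕ, ∀ k, F a (m + k) = F b (n + k)) := by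
  constructor
  · intro a; exact ⟨0, 0, fun _ => rfl⟩
  · rintro a b ⟨m, n, h⟩; exact ⟨n, m, fun k => (h k).symm⟩
  · rintro a b c ⟨m, n, h1⟩ ⟨m', n', h2⟩
    refine ⟨m + m', n' + n, fun k => ?_⟩
    have e1 := h1 (m' + k)
    have e2 := h2 (n + k)
    rw [show m + m' + k = m + (m' + k) by omega,
        show n' + n + k = n' + (n + k) by omega,
        show n + (m' + k) = m' + (n + k) by omega] at *
    exact e1.trans e2

lemma stRed_equivalence (T : UGraph) : Equivalence T.stRed :=
  stGen_equiv (fun l : T.RedInf => l.1)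

lemma stEquiv_equivalence (G : DirGraph) : Equivalence G.stEquiv :=
  stGen_equiv (fun l : G.InfPath => l.1)

/-- Inverse of `dualInf`. -/
def UGraph.fromDual (T : UGraph) (p : (T.dual).InfPath) : T.RedInf :=
  ⟨fun n => (p.1 n).1.1, by
    intro n
    have h1 := (p.1 n).2.1
    have h2 : (p.1 n).1.2 = (p.1 (n+1)).1.1 := p.2 n
    rw [h1, h2], by
    intro n h
    have h2 : (p.1 n).1.2 = (p.1 (n+1)).1.1 := p.2 n
    exact (p.1 n).2.2 (h2.trans h)⟩

lemma UGraph.fromDual_dualInf (T : UGraph) (l : T.RedInf) : T.fromDual (T.dualInf l) = l :=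
  Subtype.ext rfl

lemma UGraph.dualInf_fromDual (T : UGraph) (p : (T.dual).InfPath) : T.dualInf (T.fromDual p) = p := by
  refine Subtype.ext (funext fun n => Subtype.ext (Prod.ext rfl ?_))
  exact (show (p.1 n).1.2 = (p.1 (n+1)).1.1 from p.2 n).symm

lemma UGraph.stRed_of_stEquiv (T : UGraph) {a b : (T.dual).InfPath}
    (h : (T.dual).stEquiv a b) : T.stRed (T.fromDual a) (T.fromDual b) := by
  obtain ⟨m, n, h⟩ := h
  exact ⟨m, n, fun k => congrArg (fun e => e.1.1) (h k)⟩

lemma UGraph.stEquiv_of_stRed (T : UGraph) {a b : T.RedInf}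
    (h : T.stRed a b) : (T.dual).stEquiv (T.dualInf a) (T.dualInf b) := by
  obtain ⟨m, n, h⟩ := h
  refine ⟨m, n, fun k => Subtype.ext (Prod.ext (h k) ?_)⟩
  have := h (k + 1)
  simpa [UGraph.dualInf, show m + (k + 1) = m + k + 1 by omega, show n + (k + 1) = n + k + 1 by omega] using this

end Aux

/-- The identification of reduced infinite paths in a locally finite nonsingular tree `T`
with infinite paths in the dual graph `T̂` induces a homeomorphism `∂T ≅ ∂T̂`, which is
equivariant for any (group) action on `T` by graph automorphisms. -/
theorem stmt10 (T : UGraph) [Countable T.V] [Countable T.E]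
    (htree : T.IsTree) (hlf : T.LocFinite) (hns : T.Nonsingular) :
    ∃ h : @Homeomorph T.TBdry (T.dual).Bdry T.tbdryTop (T.dual).bdryTop,
      (∀ l : T.RedInf,
        h (Quot.mk T.stRed l) = Quot.mk (T.dual).stEquiv (T.dualInf l)) ∧
      (∀ (aE : T.E → T.E)
        (hadj : ∀ e f, T.s e = T.r f → T.s (aE e) = T.r (aE f))
        (hbar : ∀ e, aE (T.bar e) = T.bar (aE e))
        (hinj : Function.Injective aE) (l : T.RedInf),
          h (Quot.mk T.stRed (T.actRed aE hadj hbar hinj l)) =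
            Quot.mk (T.dual).stEquiv (T.dualInf (T.actRed aE hadj hbar hinj l))) := by
  classical
  -- the forward and backward maps on quotients
  let F : T.TBdry → (T.dual).Bdry :=
    Quot.map T.dualInf (fun a b h => T.stEquiv_of_stRed h)
  let G : (T.dual).Bdry → T.TBdry :=
    Quot.map T.fromDual (fun a b h => T.stRed_of_stEquiv h)
  have hGF : ∀ x, G (F x) = x := by
    intro x
    induction x using Quot.ind with
    | _ l =>
      show Quot.mk T.stRed (T.fromDual (T.dualInf l)) = Quot.mk T.stRed l
      rw [T.fromDual_dualInf]
  have hFG : ∀ y, F (G y) = y := by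
    intro y
    induction y using Quot.ind with
    | _ p =>
      show Quot.mk (T.dual).stEquiv (T.dualInf (T.fromDual p)) = Quot.mk _ p
      rw [T.dualInf_fromDual]
  let e : T.TBdry ≃ (T.dual).Bdry := ⟨F, G, hGF, hFG⟩
  -- preimage computations
  have hpre : ∀ v : T.E, F ⁻¹' ((T.dual).Zb v) = T.ZT v := by
    intro v
    ext x
    induction x using Quot.ind with
    | _ l => ?_
    constructor
    · rintro ⟨p, hp0, hp⟩
      have hrel : (T.dual).stEquiv p (T.dualInf l) :=
        ((stEquiv_equivalence (T.dual)).eqvGen_iff).mp (Quot.eq.mp hp)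
      obtain ⟨m, n, h⟩ := hrel
      refine ⟨⟨fun k => (p.1 k).1.1, (T.fromDual p).2⟩, hp0, ?_⟩
      exact Quot.sound ⟨m, n, fun k => congrArg (fun q => q.1.1) (h k)⟩
    · rintro ⟨l', hl0, hl⟩
      have hrel : T.stRed l' l :=
        ((stRed_equivalence T).eqvGen_iff).mp (Quot.eq.mp hl)
      exact ⟨T.dualInf l', hl0, Quot.sound (T.stEquiv_of_stRed hrel)⟩
  have hpre' : ∀ v : T.E, G ⁻¹' (T.ZT v) = (T.dual).Zb v := by
    intro v
    ext y
    induction y using Quot.ind with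
    | _ p => ?_
    constructor
    · rintro ⟨l, hl0, hl⟩
      have hrel : T.stRed l (T.fromDual p) :=
        ((stRed_equivalence T).eqvGen_iff).mp (Quot.eq.mp hl)
      refine ⟨T.dualInf l, hl0, ?_⟩
      have : (T.dual).stEquiv (T.dualInf l) p := by
        have h1 := T.stEquiv_of_stRed hrel
        rw [T.dualInf_fromDual] at h1
        exact h1
      exact Quot.sound this
    · rintro ⟨p', hp0, hp⟩
      have hrel : (T.dual).stEquiv p' p :=
        ((stEquiv_equivalence (T.dual)).eqvGen_iff).mp (Quot.eq.mp hp)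
      exact ⟨T.fromDual p', hp0, Quot.sound (T.stRed_of_stEquiv hrel)⟩
  letI t1 : TopologicalSpace T.TBdry := T.tbdryTop
  letI t2 : TopologicalSpace (T.dual).Bdry := (T.dual).bdryTop
  have contF : Continuous F := by
    rw [show t2 = (T.dual).bdryTop from rfl, DirGraph.bdryTop,
      continuous_generateFrom_iff]
    rintro S ⟨v, rfl⟩
    rw [hpre v]
    exact TopologicalSpace.isOpen_generateFrom_of_mem ⟨v, rfl⟩
  have contG : Continuous G := by
    rw [show t1 = T.tbdryTop from rfl, UGraph.tbdryTop,
      continuous_generateFrom_iff]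
    rintro S ⟨v, rfl⟩
    rw [hpre' v]
    exact TopologicalSpace.isOpen_generateFrom_of_mem ⟨v, rfl⟩
  refine ⟨⟨e, contF, contG⟩, fun l => rfl, fun aE hadj hbar hinj l => rfl⟩
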